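/- Let K ∈ ℝ and β > 0 with 4K + 1 > 0, set α₊ = (1 + √(4K+1))/2, and let f be a real-analytic function on a neighborhood of 0 with f(0) = 0. Let δ > 0 and define V(x) = x^{-2}(K + f(x^β)) for 0 < x < δ (assuming x^β lies in the domain of f). Then there exist δ' ∈ (0, δ] and a real-analytic function G on a neighborhood of 0 with G(0) = 1 such that the function φ₁(x) := x^{α₊} G(x^β) satisfies −φ₁''(x) + V(x) φ₁(x) = 0 for all 0 < x < δ'. -/

import Mathlib

set_option maxHeartbeats 1000000

open FormalMultilinearSeries
open scoped ENNReal NNReal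

lemma hasSum_mul_deriv {g : ℕ → ℝ} {G : ℝ → ℝ} {r : ℝ≥0∞}
    (h : HasFPowerSeriesOnBall G (FormalMultilinearSeries.ofScalars ℝ g) 0 r)
    {t : ℝ} (ht : (‖t‖₊ : ℝ≥0∞) < r) :
    HasSum (fun n : ℕ ↦ (n : ℝ) * g n * t ^ n) (t * deriv G t) := by
  have hmem : t ∈ Metric.eball (0:ℝ) r := by
    rw [Metric.mem_eball, edist_zero_right, enorm_eq_nnnorm]; exact ht
  have hfd := h.fderiv
  have hs := hfd.hasSum hmem
  have hs2 := (ContinuousLinearMap.apply ℝ ℝ t).hasSum hs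
  simp only [ContinuousLinearMap.apply_apply] at hs2
  have hterm : ∀ n : ℕ,
      ((FormalMultilinearSeries.ofScalars ℝ g).derivSeries n fun _ ↦ t) t
        = ((n:ℝ)+1) * g (n+1) * t ^ (n+1) := by
    intro n
    rw [FormalMultilinearSeries.derivSeries_apply_diag]
    rw [FormalMultilinearSeries.ofScalars_apply_eq]
    ring_nf
  have hval : fderiv ℝ G (0 + t) t = t * deriv G t := by
    rw [zero_add]
    have h1 : (fderiv ℝ G t) (t • (1:ℝ)) = t • (fderiv ℝ G t) 1 := (fderiv ℝ G t).map_smul _ _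
    simp only [smul_eq_mul, mul_one] at h1
    rw [h1, fderiv_apply_one_eq_deriv]
  rw [hval] at hs2
  have hs3 : HasSum (fun n : ℕ ↦ ((n:ℝ)+1) * g (n+1) * t ^ (n+1)) (t * deriv G t) := by
    simp only [hterm] at hs2; exact hs2
  have hs4 : HasSum (fun n : ℕ ↦ ((n+1 : ℕ) : ℝ) * g (n+1) * t ^ (n+1)) (t * deriv G t) := by
    convert hs3 using 3 with n; push_cast; ring
  have := (hasSum_nat_add_iff (f := fun n : ℕ ↦ (n : ℝ) * g n * t ^ n) 1).mp hs4
  simpa using this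

lemma ofScalars_ball {g : ℕ → ℝ} {M : ℝ} (hM : 1 ≤ M) (hg : ∀ n, |g n| ≤ (2*M) ^ n) :
    HasFPowerSeriesOnBall (FormalMultilinearSeries.ofScalars ℝ g).sum
      (FormalMultilinearSeries.ofScalars ℝ g) 0 (ENNReal.ofReal (1/(4*M))) := by
  have hM0 : (0:ℝ) < M := lt_of_lt_of_le one_pos hM
  have hε : (0:ℝ) < 1/(4*M) := by positivity
  have hrad : ENNReal.ofReal (1/(4*M)) ≤ (FormalMultilinearSeries.ofScalars ℝ g).radius := by
    have key := (FormalMultilinearSeries.ofScalars ℝ g).le_radius_of_bound 1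
      (r := (1/(4*M)).toNNReal) ?_
    · simpa [ENNReal.ofReal] using key
    · intro n
      rw [FormalMultilinearSeries.ofScalars_norm, Real.coe_toNNReal _ hε.le]
      calc |g n| * (1/(4*M)) ^ n ≤ (2*M) ^ n * (1/(4*M)) ^ n := by
            apply mul_le_mul_of_nonneg_right (hg n) (by positivity)
        _ = (1/2 : ℝ) ^ n := by
            rw [← mul_pow]; congr 1; field_simp; ring
        _ ≤ 1 := pow_le_one₀ (by norm_num) (by norm_num)
  have h0 : 0 < (FormalMultilinearSeries.ofScalars ℝ g).radius :=
    lt_of_lt_of_le (ENNReal.ofReal_pos.mpr hε) hrad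
  exact ((FormalMultilinearSeries.ofScalars ℝ g).hasFPowerSeriesOnBall h0).mono
    (ENNReal.ofReal_pos.mpr hε) hrad

lemma nnnorm_lt_ofReal {t ε : ℝ} (ht : |t| < ε) : (‖t‖₊ : ℝ≥0∞) < ENNReal.ofReal ε := by
  rw [← enorm_eq_nnnorm, ← ofReal_norm]
  exact ENNReal.ofReal_lt_ofReal_iff (lt_of_le_of_lt (abs_nonneg t) ht) |>.mpr
    (by simpa [Real.norm_eq_abs] using ht)

lemma G_ode (β2 bs : ℝ) (g a : ℕ → ℝ) (M rf : ℝ) (hM : 1 ≤ M)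
    (hg : ∀ n, |g n| ≤ M ^ n)
    (hrec : ∀ n : ℕ, (β2 * n^2 + bs * n) * g n
      = ∑ m ∈ Finset.range (n+1), a m * g (n - m))
    (f : ℝ → ℝ)
    (hfs : ∀ t : ℝ, |t| < rf → HasSum (fun m ↦ a m * t^m) (f t))
    (hfn : ∀ t : ℝ, |t| < rf → Summable (fun m ↦ |a m| * |t|^m))
    {t : ℝ} (ht1 : |t| < rf) (ht2 : |t| < 1/(8*M)) :
    β2 * (t * deriv (FormalMultilinearSeries.ofScalars ℝ g).sum t
        + t^2 * deriv (deriv (FormalMultilinearSeries.ofScalars ℝ g).sum) t)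
      + bs * (t * deriv (FormalMultilinearSeries.ofScalars ℝ g).sum t)
    = f t * (FormalMultilinearSeries.ofScalars ℝ g).sum t := by
  have hM0 : (0:ℝ) < M := lt_of_lt_of_le one_pos hM
  set G := (FormalMultilinearSeries.ofScalars ℝ g).sum with hG
  have hg' : ∀ n, |g n| ≤ (2*M) ^ n := fun n ↦ (hg n).trans
    (pow_le_pow_left₀ hM0.le (by linarith) n)
  have hball := ofScalars_ball hM hg'
  have ht2a : |t| < 1/(4*M) := lt_of_lt_of_le ht2 (by
    rw [div_le_div_iff₀ (by positivity) (by positivity)]; nlinarith)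
  have ht2' := nnnorm_lt_ofReal ht2a
  -- A0 : values
  have A0 : HasSum (fun n : ℕ ↦ g n * t ^ n) (G t) := by
    have hmem : t ∈ Metric.eball (0:ℝ) (ENNReal.ofReal (1/(4*M))) := by
      rw [Metric.mem_eball, edist_zero_right, enorm_eq_nnnorm]; exact ht2'
    have := hball.hasSum hmem
    simpa only [FormalMultilinearSeries.ofScalars_apply_eq, smul_eq_mul, zero_add] using this
  -- A1 : t G'
  have A1 : HasSum (fun n : ℕ ↦ (n:ℝ) * g n * t ^ n) (t * deriv G t) :=
    hasSum_mul_deriv hball ht2'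
  -- the series for s * G' s
  set gd : ℕ → ℝ := fun n ↦ (n:ℝ) * g n with hgd
  set H := (FormalMultilinearSeries.ofScalars ℝ gd).sum with hH
  have hgd' : ∀ n, |gd n| ≤ (2*(2*M)) ^ n := by
    intro n
    have h1 : |gd n| ≤ (n:ℝ) * M ^ n := by
      rw [hgd, abs_mul, Nat.abs_cast]
      exact mul_le_mul_of_nonneg_left (hg n) (Nat.cast_nonneg n)
    have h2 : (n:ℝ) ≤ 2 ^ n := by
      exact_mod_cast (Nat.lt_two_pow_self (n := n)).le
    calc |gd n| ≤ (n:ℝ) * M ^ n := h1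
      _ ≤ 2 ^ n * M ^ n := by
          apply mul_le_mul_of_nonneg_right h2 (by positivity)
      _ ≤ (2*(2*M)) ^ n := by
          rw [← mul_pow]
          apply pow_le_pow_left₀ (by positivity)
          nlinarith
  have hballq := ofScalars_ball (M := 2*M) (by linarith) hgd'
  have ht2q : |t| < 1/(4*(2*M)) := by
    have : (1:ℝ)/(8*M) = 1/(4*(2*M)) := by ring_nf
    rwa [this] at ht2
  have ht2q' := nnnorm_lt_ofReal ht2q
  have B1 : HasSum (fun n : ℕ ↦ (n:ℝ) * gd n * t ^ n) (t * deriv H t) :=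
    hasSum_mul_deriv hballq ht2q'
  -- identify H with s * G' s on the small ball
  have hHG : ∀ s : ℝ, |s| < 1/(4*M) → H s = s * deriv G s := by
    intro s hs
    have hs' := nnnorm_lt_ofReal hs
    have hsum := hasSum_mul_deriv hball hs'
    have : H s = ∑' n : ℕ, gd n • s ^ n := by
      rw [hH, FormalMultilinearSeries.sum]
      exact tsum_congr fun n ↦ FormalMultilinearSeries.ofScalars_apply_eq gd s n
    rw [this, ← hsum.tsum_eq]
    exact tsum_congr fun n ↦ by simp only [hgd, smul_eq_mul]
  -- derivative of H at t
  have hderivH : deriv H t = deriv G t + t * deriv (deriv G) t := by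
    have hopen : IsOpen (Metric.ball (0:ℝ) (1/(4*M))) := Metric.isOpen_ball
    have hmem : t ∈ Metric.ball (0:ℝ) (1/(4*M)) := by
      rw [Metric.mem_ball, Real.dist_eq, sub_zero]; exact ht2a
    have hev : H =ᶠ[nhds t] fun s ↦ s * deriv G s := by
      filter_upwards [hopen.mem_nhds hmem] with s hs
      exact hHG s (by rwa [Metric.mem_ball, Real.dist_eq, sub_zero] at hs)
    rw [hev.deriv_eq]
    have hGan : AnalyticOnNhd ℝ G (Metric.eball (0:ℝ) (ENNReal.ofReal (1/(4*M)))) :=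
      hball.analyticOnNhd
    have hdG : HasDerivAt (deriv G) (deriv (deriv G) t) t := by
      have : AnalyticAt ℝ (deriv G) t := hGan.deriv t (by
        rw [Metric.mem_eball, edist_zero_right, enorm_eq_nnnorm]; exact ht2')
      exact this.differentiableAt.hasDerivAt
    have hprod : HasDerivAt (fun s : ℝ ↦ s * deriv G s)
        (1 * deriv G t + t * deriv (deriv G) t) t := (hasDerivAt_id t).mul hdG
    rw [hprod.deriv]; ring
  have A2 : HasSum (fun n : ℕ ↦ ((n:ℝ))^2 * g n * t ^ n)
      (t * deriv G t + t^2 * deriv (deriv G) t) := by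
    have : t * deriv H t = t * deriv G t + t^2 * deriv (deriv G) t := by
      rw [hderivH]; ring
    rw [← this]
    have hfun : (fun n : ℕ ↦ ((n:ℝ))^2 * g n * t ^ n)
        = fun n : ℕ ↦ (n:ℝ) * gd n * t ^ n := by
      funext n; simp only [hgd]; ring
    rw [hfun]; exact B1
  -- combine LHS
  have CL : HasSum (fun n : ℕ ↦ (β2 * (n:ℝ)^2 + bs * n) * g n * t ^ n)
      (β2 * (t * deriv G t + t^2 * deriv (deriv G) t) + bs * (t * deriv G t)) := by
    have h := (A2.mul_left β2).add (A1.mul_left bs)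
    have hfun : (fun n : ℕ ↦ β2 * (((n:ℝ))^2 * g n * t ^ n) + bs * ((n:ℝ) * g n * t ^ n))
        = fun n : ℕ ↦ (β2 * (n:ℝ)^2 + bs * n) * g n * t ^ n := by
      funext n; ring
    rw [← hfun]; exact h
  -- Cauchy product for RHS
  have hsa := hfs t ht1
  have Sa : Summable (fun m : ℕ ↦ ‖a m * t ^ m‖) := by
    have := hfn t ht1
    simpa [abs_mul, abs_pow] using this
  have Sg : Summable (fun n : ℕ ↦ ‖g n * t ^ n‖) := by
    have hgeo : Summable (fun n : ℕ ↦ (M * |t|) ^ n) := by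
      apply summable_geometric_of_lt_one (by positivity)
      calc M * |t| < M * (1/(8*M)) := mul_lt_mul_of_pos_left ht2 hM0
        _ = 1/8 := by field_simp
        _ < 1 := by norm_num
    refine Summable.of_nonneg_of_le (fun n ↦ norm_nonneg _) (fun n ↦ ?_) hgeo
    rw [Real.norm_eq_abs, abs_mul, abs_pow, mul_pow]
    exact mul_le_mul_of_nonneg_right (hg n) (by positivity)
  have hcauchy := tsum_mul_tsum_eq_tsum_sum_range_of_summable_norm Sa Sg
  rw [hsa.tsum_eq, A0.tsum_eq] at hcauchy
  -- rewrite the Cauchy sum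
  have hinner : ∀ n : ℕ, (∑ k ∈ Finset.range (n+1), a k * t ^ k * (g (n - k) * t ^ (n - k)))
      = (β2 * (n:ℝ)^2 + bs * n) * g n * t ^ n := by
    intro n
    rw [hrec n, Finset.sum_mul]
    apply Finset.sum_congr rfl
    intro k hk
    have hkn : k ≤ n := Nat.lt_succ_iff.mp (Finset.mem_range.mp hk)
    have : t ^ k * t ^ (n - k) = t ^ n := by
      rw [← pow_add]; congr 1; omega
    calc a k * t ^ k * (g (n - k) * t ^ (n - k)) = a k * g (n - k) * (t ^ k * t ^ (n - k)) := by ring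
      _ = a k * g (n - k) * t ^ n := by rw [this]
  rw [hcauchy]
  rw [← CL.tsum_eq]
  exact (tsum_congr fun n ↦ (hinner n)).symm


noncomputable def frobG (a : ℕ → ℝ) (D : ℕ → ℝ) : ℕ → ℝ
  | 0 => 1
  | n+1 => (∑ m ∈ Finset.range (n+1), a (m+1) * frobG a D (n - m)) / D (n+1)
  decreasing_by exact Nat.lt_succ_of_le (Nat.sub_le n m)

lemma frobG_zero (a D : ℕ → ℝ) : frobG a D 0 = 1 := by rw [frobG]

lemma frobG_succ (a D : ℕ → ℝ) (n : ℕ) :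
    frobG a D (n+1) = (∑ m ∈ Finset.range (n+1), a (m+1) * frobG a D (n - m)) / D (n+1) := by
  rw [frobG]

lemma frobG_rec (a D : ℕ → ℝ) (ha0 : a 0 = 0) (hD0 : D 0 = 0) (hD : ∀ n : ℕ, D (n+1) ≠ 0) :
    ∀ n : ℕ, D n * frobG a D n = ∑ m ∈ Finset.range (n+1), a m * frobG a D (n - m) := by
  intro n
  cases n with
  | zero => simp [hD0, ha0]
  | succ n =>
    rw [frobG_succ, mul_div_cancel₀ _ (hD n)]
    rw [Finset.sum_range_succ' (fun m ↦ a m * frobG a D (n + 1 - m)) (n+1)]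
    simp only [ha0, zero_mul, add_zero]
    apply Finset.sum_congr rfl
    intro m _
    congr 2
    omega

lemma frobG_bound (a D : ℕ → ℝ) (C r M β2 : ℝ) (hC : 0 ≤ C) (hr : 0 < r) (hβ2 : 0 < β2)
    (ha : ∀ m : ℕ, |a m| ≤ C * r ^ m) (hD : ∀ n : ℕ, β2 ≤ D (n+1))
    (hM1 : 2*r ≤ M) (hM2 : 2*C*r/β2 ≤ M) (hM0 : 1 ≤ M) :
    ∀ n : ℕ, |frobG a D n| ≤ M ^ n := by
  have hMpos : (0:ℝ) < M := lt_of_lt_of_le one_pos hM0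
  intro n
  induction n using Nat.strong_induction_on with
  | _ n IH =>
    cases n with
    | zero => simp [frobG_zero]
    | succ n =>
      rw [frobG_succ, abs_div]
      have hDpos : (0:ℝ) < D (n+1) := lt_of_lt_of_le hβ2 (hD n)
      rw [abs_of_pos hDpos]
      have hsum : |∑ m ∈ Finset.range (n+1), a (m+1) * frobG a D (n - m)|
          ≤ 2*C*r*M^n := by
        calc |∑ m ∈ Finset.range (n+1), a (m+1) * frobG a D (n - m)|
            ≤ ∑ m ∈ Finset.range (n+1), |a (m+1) * frobG a D (n - m)| :=
              Finset.abs_sum_le_sum_abs _ _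
          _ ≤ ∑ m ∈ Finset.range (n+1), C*r*M^n*(1/2)^m := by
              apply Finset.sum_le_sum
              intro m hm
              have hmn : m ≤ n := Nat.lt_succ_iff.mp (Finset.mem_range.mp hm)
              rw [abs_mul]
              have h1 : |a (m+1)| ≤ C * r ^ (m+1) := ha (m+1)
              have h2 : |frobG a D (n - m)| ≤ M ^ (n - m) :=
                IH (n - m) (Nat.lt_succ_of_le (Nat.sub_le n m))
              calc |a (m+1)| * |frobG a D (n - m)| ≤ (C * r ^ (m+1)) * M ^ (n-m) := by
                    apply mul_le_mul h1 h2 (abs_nonneg _) (by positivity)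
                _ = C * r * (r^m * M^(n-m)) := by ring
                _ ≤ C * r * ((M/2)^m * M^(n-m)) := by
                    apply mul_le_mul_of_nonneg_left _ (by positivity)
                    apply mul_le_mul_of_nonneg_right _ (by positivity)
                    exact pow_le_pow_left₀ hr.le (by linarith) m
                _ = C*r*M^n*(1/2)^m := by
                    rw [div_pow]
                    rw [show M ^ m / 2 ^ m * M ^ (n - m) = (M ^ m * M ^ (n-m)) / 2^m from by ring]
                    rw [← pow_add, show m + (n - m) = n from by omega]
                    rw [div_pow]
                    ring
          _ = C*r*M^n * ∑ m ∈ Finset.range (n+1), (1/2:ℝ)^m := by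
              rw [Finset.mul_sum]
          _ ≤ C*r*M^n * 2 := by
              apply mul_le_mul_of_nonneg_left _ (by positivity)
              rw [geom_sum_eq (by norm_num)]
              have : (0:ℝ) ≤ (1/2:ℝ)^(n+1) := by positivity
              rw [div_le_iff_of_neg (by norm_num)]
              nlinarith
          _ = 2*C*r*M^n := by ring
      calc |∑ m ∈ Finset.range (n+1), a (m+1) * frobG a D (n - m)| / D (n+1)
          ≤ (2*C*r*M^n) / β2 := by
            apply div_le_div₀ (by positivity) hsum hβ2 (hD n)
        _ = (2*C*r/β2) * M^n := by ring
        _ ≤ M * M^n := mul_le_mul_of_nonneg_right hM2 (by positivity)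
        _ = M^(n+1) := by ring


lemma phi_second_deriv (αp β : ℝ) (hβ : 0 < β) (G : ℝ → ℝ) (R : ℝ)
    (hG : ∀ u : ℝ, |u| < R → AnalyticAt ℝ G u)
    (hG' : ∀ u : ℝ, |u| < R → AnalyticAt ℝ (deriv G) u)
    (δ' : ℝ) (hδR : ∀ y ∈ Set.Ioo (0:ℝ) δ', y ^ β < R)
    {x : ℝ} (hx : x ∈ Set.Ioo (0:ℝ) δ') :
    deriv (deriv (fun y => y ^ αp * G (y ^ β))) x
      = αp*(αp-1) * x^(αp-2) * G (x^β)
        + β*(2*αp+β-1) * x^(αp-2) * (x^β * deriv G (x^β))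
        + β^2 * x^(αp-2) * ((x^β)^2 * deriv (deriv G) (x^β)) := by
  obtain ⟨hx0, hxδ⟩ := hx
  have hR0 : ∀ y ∈ Set.Ioo (0:ℝ) δ', |y ^ β| < R := fun y hy ↦ by
    rw [abs_of_pos (Real.rpow_pos_of_pos hy.1 β)]; exact hδR y hy
  set ψ : ℝ → ℝ := fun y ↦ αp * (y^(αp-1) * G (y^β)) + β * (y^(αp+β-1) * deriv G (y^β)) with hψ
  have hstep1 : ∀ y ∈ Set.Ioo (0:ℝ) δ',
      HasDerivAt (fun z : ℝ ↦ z ^ αp * G (z ^ β)) (ψ y) y := by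
    intro y hy
    have hy0 : (0:ℝ) < y := hy.1
    have h1 : HasDerivAt (fun z : ℝ ↦ z ^ αp) (αp * y ^ (αp - 1)) y :=
      Real.hasDerivAt_rpow_const (Or.inl hy0.ne')
    have h2 : HasDerivAt (fun z : ℝ ↦ z ^ β) (β * y ^ (β - 1)) y :=
      Real.hasDerivAt_rpow_const (Or.inl hy0.ne')
    have h3 : HasDerivAt G (deriv G (y^β)) (y^β) :=
      ((hG _ (hR0 y hy)).differentiableAt).hasDerivAt
    have hcomp : HasDerivAt (fun z : ℝ ↦ G (z ^ β)) (deriv G (y^β) * (β * y ^ (β-1))) y :=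
      h3.comp y h2
    have := h1.mul hcomp
    convert this using 1
    any_goals with_reducible_and_instances rfl
    rw [hψ]
    have e1 : y ^ αp * y ^ (β-1) = y ^ (αp+β-1) := by
      rw [← Real.rpow_add hy0]; congr 1; ring
    simp only []
    rw [show αp * (y ^ (αp - 1) * G (y ^ β)) + β * (y ^ (αp + β - 1) * deriv G (y ^ β))
        = αp * (y ^ (αp - 1) * G (y ^ β)) + β * ((y ^ αp * y ^ (β-1)) * deriv G (y ^ β)) from by
      rw [e1]]
    ring
  have hstep2 : deriv (deriv (fun y : ℝ => y ^ αp * G (y ^ β))) x = deriv ψ x := by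
    apply Filter.EventuallyEq.deriv_eq
    filter_upwards [isOpen_Ioo.mem_nhds ⟨hx0, hxδ⟩] with y hy
    exact (hstep1 y hy).deriv
  have hxIoo : x ∈ Set.Ioo (0:ℝ) δ' := ⟨hx0, hxδ⟩
  set t := x ^ β with htdef
  have ht0 : 0 < t := Real.rpow_pos_of_pos hx0 β
  -- derivative of ψ at x
  have h1 : HasDerivAt (fun z : ℝ ↦ z ^ (αp-1)) ((αp-1) * x ^ (αp-1-1)) x :=
    Real.hasDerivAt_rpow_const (Or.inl hx0.ne')
  have h1b : HasDerivAt (fun z : ℝ ↦ z ^ (αp+β-1)) ((αp+β-1) * x ^ (αp+β-1-1)) x :=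
    Real.hasDerivAt_rpow_const (Or.inl hx0.ne')
  have h2 : HasDerivAt (fun z : ℝ ↦ z ^ β) (β * x ^ (β - 1)) x :=
    Real.hasDerivAt_rpow_const (Or.inl hx0.ne')
  have h3 : HasDerivAt G (deriv G t) t := ((hG _ (hR0 x hxIoo)).differentiableAt).hasDerivAt
  have h4 : HasDerivAt (deriv G) (deriv (deriv G) t) t :=
    ((hG' _ (hR0 x hxIoo)).differentiableAt).hasDerivAt
  have hcomp1 : HasDerivAt (fun z : ℝ ↦ G (z ^ β)) (deriv G t * (β * x ^ (β-1))) x :=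
    h3.comp x h2
  have hcomp2 : HasDerivAt (fun z : ℝ ↦ deriv G (z ^ β))
      (deriv (deriv G) t * (β * x ^ (β-1))) x := by have := h4.comp x h2; exact this
  have hd1 : HasDerivAt (fun y : ℝ ↦ αp * (y^(αp-1) * G (y^β)))
      (αp * ((αp-1) * x ^ (αp-1-1) * G t + x ^ (αp-1) * (deriv G t * (β * x ^ (β-1))))) x :=
    (h1.mul hcomp1).const_mul αp
  have hd2 : HasDerivAt (fun y : ℝ ↦ β * (y^(αp+β-1) * deriv G (y^β)))
      (β * ((αp+β-1) * x ^ (αp+β-1-1) * deriv G t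
        + x ^ (αp+β-1) * (deriv (deriv G) t * (β * x ^ (β-1))))) x :=
    (h1b.mul hcomp2).const_mul β
  have hdψ : deriv ψ x
      = αp * ((αp-1) * x ^ (αp-1-1) * G t + x ^ (αp-1) * (deriv G t * (β * x ^ (β-1))))
        + β * ((αp+β-1) * x ^ (αp+β-1-1) * deriv G t
          + x ^ (αp+β-1) * (deriv (deriv G) t * (β * x ^ (β-1)))) :=
    (hd1.add hd2).deriv
  rw [hstep2, hdψ]
  -- exponent identities
  have e1 : x ^ (αp-1) * x ^ (β-1) = x ^ (αp-2) * x ^ β := by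
    rw [← Real.rpow_add hx0, ← Real.rpow_add hx0]; congr 1; ring
  have e2 : x ^ (αp+β-1-1) = x ^ (αp-2) * x ^ β := by
    rw [← Real.rpow_add hx0]; congr 1; ring
  have e3 : x ^ (αp+β-1) * x ^ (β-1) = x ^ (αp-2) * (x ^ β)^2 := by
    rw [sq, ← mul_assoc, ← Real.rpow_add hx0, ← Real.rpow_add hx0, ← Real.rpow_add hx0]
    congr 1; ring
  have e4 : x ^ (αp-1-1) = x ^ (αp-2) := by congr 1; ring
  rw [e4]
  linear_combination (αp * β * deriv G t) * e1 + (β*(αp+β-1) * deriv G t) * e2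
    + (β^2 * deriv (deriv G) t) * e3


set_option maxHeartbeats 2000000

/-- first half of Lemma 1: for the potential
`V(x) = x⁻²(K + f(x^β))` with `4K + 1 > 0`, `β > 0` and `f` analytic with `f(0) = 0`,
there is a Frobenius solution `φ₁(x) = x^{α₊} G(x^β)` of `-y'' + V y = 0` near `x = 0`,
where `α₊ = (1 + √(4K+1))/2` and `G` is analytic with `G(0) = 1`. -/
theorem stmt_13 (K β : ℝ) (hβ : 0 < β) (hK : 0 < 4 * K + 1)
    (αp : ℝ) (hαp : αp = (1 + Real.sqrt (4 * K + 1)) / 2)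
    (f : ℝ → ℝ) (hf : AnalyticAt ℝ f 0) (hf0 : f 0 = 0)
    (δ : ℝ) (hδ : 0 < δ)
    (V : ℝ → ℝ) (hV : ∀ x ∈ Set.Ioo (0:ℝ) δ, V x = (K + f (x ^ β)) / x ^ 2) :
    ∃ δ' : ℝ, 0 < δ' ∧ δ' ≤ δ ∧
      ∃ G : ℝ → ℝ, AnalyticAt ℝ G 0 ∧ G 0 = 1 ∧
        ∀ x ∈ Set.Ioo (0:ℝ) δ',
          -(deriv (deriv (fun y => y ^ αp * G (y ^ β))) x)
            + V x * (x ^ αp * G (x ^ β)) = 0 := by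
  set s : ℝ := Real.sqrt (4 * K + 1) with hs
  have hs0 : 0 < s := Real.sqrt_pos.mpr hK
  have hs2 : s ^ 2 = 4 * K + 1 := Real.sq_sqrt hK.le
  have hαpK : αp * (αp - 1) = K := by rw [hαp]; nlinarith [hs2]
  have h2αp : 2 * αp - 1 = s := by rw [hαp]; ring
  set D : ℕ → ℝ := fun n ↦ β^2 * (n:ℝ)^2 + (β*s) * (n:ℝ) with hD
  have hD0 : D 0 = 0 := by simp [hD]
  have hDlb : ∀ n : ℕ, β^2 ≤ D (n+1) := by
    intro n
    have hn : (0:ℝ) ≤ (n:ℝ) := Nat.cast_nonneg n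
    simp only [hD]
    push_cast
    nlinarith [mul_nonneg (sq_nonneg β) (by positivity : (0:ℝ) ≤ (n:ℝ)^2 + 2*(n:ℝ)),
      mul_nonneg (mul_nonneg hβ.le hs0.le) (by positivity : (0:ℝ) ≤ (n:ℝ)+1)]
  have hDne : ∀ n : ℕ, D (n+1) ≠ 0 := fun n ↦
    (lt_of_lt_of_le (by positivity) (hDlb n)).ne'
  -- power series of f
  obtain ⟨pf, hpfa⟩ := hf
  obtain ⟨rp, hpb⟩ := hpfa
  obtain ⟨rr, hrr0, hrrlt⟩ := ENNReal.lt_iff_exists_nnreal_btwn.mp hpb.r_pos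
  have hrr0' : 0 < (rr : ℝ) := by exact_mod_cast hrr0
  obtain ⟨Cf, hCf0, hCf⟩ := pf.norm_mul_pow_le_of_lt_radius (hrrlt.trans_le hpb.r_le)
  set a : ℕ → ℝ := fun n ↦ pf.coeff n with ha
  have ha0 : a 0 = 0 := by
    have h := hpb.coeff_zero 1
    show pf 0 1 = 0
    rw [h, hf0]
  have habound : ∀ m : ℕ, |a m| ≤ Cf * (1/(rr:ℝ))^m := by
    intro m
    have h1 : |a m| = ‖pf m‖ := by
      rw [FormalMultilinearSeries.norm_apply_eq_norm_coef, Real.norm_eq_abs]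
    rw [h1, one_div, inv_pow, ← div_eq_mul_inv]
    rw [le_div_iff₀ (by positivity)]
    exact hCf m
  set g : ℕ → ℝ := frobG a D with hg
  set M : ℝ := max 1 (max (2*(1/(rr:ℝ))) (2*Cf*(1/(rr:ℝ))/β^2)) with hM
  have hM1 : (1:ℝ) ≤ M := le_max_left _ _
  have hM0 : (0:ℝ) < M := lt_of_lt_of_le one_pos hM1
  have hgbound : ∀ n : ℕ, |g n| ≤ M ^ n :=
    frobG_bound a D Cf (1/(rr:ℝ)) M (β^2) hCf0.le (by positivity) (by positivity)
      habound hDlb ((le_max_left _ _).trans (le_max_right _ _))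
      ((le_max_right _ _).trans (le_max_right _ _)) hM1
  have hfs : ∀ t : ℝ, |t| < (rr:ℝ) → HasSum (fun m : ℕ ↦ a m * t^m) (f t) := by
    intro t ht
    have hmem : t ∈ Metric.eball (0:ℝ) rp := by
      rw [Metric.mem_eball, edist_zero_right, enorm_eq_nnnorm]
      refine lt_trans ?_ hrrlt
      exact_mod_cast (by rwa [← NNReal.coe_lt_coe, coe_nnnorm, Real.norm_eq_abs] : ‖t‖₊ < rr)
    have h0 := hpb.hasSum hmem
    rw [zero_add] at h0
    have hterm : ∀ m : ℕ, (pf m fun _ ↦ t) = a m * t ^ m := by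
      intro m
      rw [FormalMultilinearSeries.apply_eq_pow_smul_coeff, smul_eq_mul, mul_comm]
    exact (funext hterm : (fun m ↦ pf m fun _ ↦ t) = fun m ↦ a m * t ^ m) ▸ h0
  have hfn : ∀ t : ℝ, |t| < (rr:ℝ) → Summable (fun m : ℕ ↦ |a m| * |t|^m) := by
    intro t ht
    have hgeo : Summable (fun m : ℕ ↦ Cf * (|t|/(rr:ℝ))^m) := by
      apply Summable.mul_left
      apply summable_geometric_of_lt_one (by positivity)
      rw [div_lt_one hrr0']
      exact ht
    refine Summable.of_nonneg_of_le (fun m ↦ by positivity) (fun m ↦ ?_) hgeo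
    calc |a m| * |t|^m ≤ (Cf * (1/(rr:ℝ))^m) * |t|^m :=
          mul_le_mul_of_nonneg_right (habound m) (by positivity)
      _ = Cf * (|t|/(rr:ℝ))^m := by rw [div_pow, div_pow]; ring
  have hrec : ∀ n : ℕ, (β^2 * (n:ℝ)^2 + (β*s) * (n:ℝ)) * g n
      = ∑ m ∈ Finset.range (n+1), a m * g (n - m) := by
    intro n
    have := frobG_rec a D ha0 hD0 hDne n
    simpa [hD, hg] using this
  -- the analytic function G
  set G : ℝ → ℝ := (FormalMultilinearSeries.ofScalars ℝ g).sum with hGdef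
  have hg2 : ∀ n : ℕ, |g n| ≤ (2*M)^n := fun n ↦ (hgbound n).trans
    (pow_le_pow_left₀ hM0.le (by linarith) n)
  have hball : HasFPowerSeriesOnBall G (FormalMultilinearSeries.ofScalars ℝ g) 0
      (ENNReal.ofReal (1/(4*M))) := ofScalars_ball hM1 hg2
  have hGanOn := hball.analyticOnNhd
  have hGan : ∀ u : ℝ, |u| < 1/(4*M) → AnalyticAt ℝ G u := by
    intro u hu
    exact hGanOn u (by rw [Metric.mem_eball, edist_zero_right, enorm_eq_nnnorm]; exact nnnorm_lt_ofReal hu)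
  have hGan' : ∀ u : ℝ, |u| < 1/(4*M) → AnalyticAt ℝ (deriv G) u := by
    intro u hu
    exact hGanOn.deriv u
      (by rw [Metric.mem_eball, edist_zero_right, enorm_eq_nnnorm]; exact nnnorm_lt_ofReal hu)
  have hG0 : G 0 = 1 := by
    have h1 : G 0 = ∑' n : ℕ, g n • (0:ℝ)^n := by
      rw [hGdef, FormalMultilinearSeries.sum]
      exact tsum_congr fun n ↦ FormalMultilinearSeries.ofScalars_apply_eq g 0 n
    rw [h1, tsum_eq_single 0 (fun n hn ↦ by simp [zero_pow hn])]
    simp [hg, frobG_zero]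
  -- choice of δ'
  set ε : ℝ := min (1/(8*M)) (rr:ℝ) with hε
  have hε0 : 0 < ε := lt_min (by positivity) hrr0'
  set δ' : ℝ := min δ (ε ^ (1/β)) with hδ'
  have hδ'0 : 0 < δ' := lt_min hδ (Real.rpow_pos_of_pos hε0 _)
  have hδ'δ : δ' ≤ δ := min_le_left _ _
  have hxt : ∀ y ∈ Set.Ioo (0:ℝ) δ', y ^ β < ε := by
    intro y hy
    have h1 : y ^ β < (ε ^ (1/β)) ^ β :=
      Real.rpow_lt_rpow hy.1.le (lt_of_lt_of_le hy.2 (min_le_right _ _)) hβ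
    rwa [← Real.rpow_mul hε0.le, one_div, inv_mul_cancel₀ hβ.ne', Real.rpow_one] at h1
  refine ⟨δ', hδ'0, hδ'δ, G, hGan 0 (by simp; positivity), hG0, ?_⟩
  intro x hx
  have hx0 : 0 < x := hx.1
  set t : ℝ := x ^ β with ht
  have ht0 : 0 < t := Real.rpow_pos_of_pos hx0 β
  have htabs : |t| = t := abs_of_pos ht0
  have htε : t < ε := hxt x hx
  have ht1 : |t| < (rr:ℝ) := by rw [htabs]; exact htε.trans_le (min_le_right _ _)
  have ht2 : |t| < 1/(8*M) := by rw [htabs]; exact htε.trans_le (min_le_left _ _)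
  have ht4 : ∀ y ∈ Set.Ioo (0:ℝ) δ', y ^ β < 1/(4*M) := by
    intro y hy
    refine lt_of_lt_of_le (lt_of_lt_of_le (hxt y hy) (min_le_left _ _)) ?_
    rw [div_le_div_iff₀ (by positivity) (by positivity)]
    nlinarith
  have hODEx := G_ode (β^2) (β*s) g a M (rr:ℝ) hM1 hgbound hrec f hfs hfn ht1 ht2
  have hd2 := phi_second_deriv αp β hβ G (1/(4*M)) hGan hGan' δ' ht4 hx
  have hVx : V x = (K + f t) / x ^ 2 := hV x ⟨hx0, lt_of_lt_of_le hx.2 hδ'δ⟩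
  rw [hd2, hVx]
  have hx2 : (x:ℝ) ^ (2:ℕ) = x ^ ((2:ℕ):ℝ) := (Real.rpow_natCast x 2).symm
  have hxpow : x ^ αp = x ^ (αp - 2) * x ^ (2:ℕ) := by
    rw [hx2, ← Real.rpow_add hx0]
    congr 1
    norm_num
  have key : (K + f t) / x ^ 2 * (x ^ αp * G t) = (K + f t) * (x ^ (αp-2) * G t) := by
    rw [hxpow]
    have hx2ne : (x:ℝ) ^ (2:ℕ) ≠ 0 := pow_ne_zero 2 hx0.ne'
    field_simp
  rw [key]
  rw [← hGdef] at hODEx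
  linear_combination (-(x ^ (αp-2) * G t)) * hαpK - (x ^ (αp-2)) * hODEx
    - (β * x ^ (αp-2) * (t * deriv G t)) * h2αp
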